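/- Let p ∈ [1,∞), p ≠ 2, and let X, Y be metric spaces with bounded geometry. Suppose U : ℓ^p(X × ℕ) → ℓ^p(Y × ℕ) is a surjective isometry of the form (Uξ)(y,m) = h(y,m) ξ(g⁻¹(y,m)) for a unimodular function h and a bijection g : X × ℕ → Y × ℕ, such that conjugation by U and by U⁻¹ preserve the stabilized uniform Roe algebras. Define f : X → Y by f(x) = π_Y(g(x,0)) and f' : Y → X by f'(y) = π_X(g⁻¹(y,0)), where π_X, π_Y are the coordinate projections. Assume the following uniform closeness property: for all R ≥ 0 there is S ≥ 0 such that whenever d(x,x') ≤ R in X and y, y' ∈ Y satisfy |⟨Uδ_{(x,n)}, δ_{(y,m)}⟩| = 1 = |⟨Uδ_{(x',n')}, δ_{(y',m')}⟩| for some m,n,m',n' ∈ ℕ, then d(y,y') ≤ S, and the symmetric property with X, Y swapped and U replaced by U⁻¹. Then f and f' are uniformly expansive, f ∘ f' is close to the identity on Y, and f' ∘ f is close to the identity on X; hence X and Y are coarsely equivalent. -/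
import Mathlib


open scoped ENNReal

/-- A map between (pseudo)metric spaces is uniformly expansive if points at distance at most `R`
are sent to points at distance at most `S = S(R)`. -/
def UniformlyExpansive {X Y : Type*} [PseudoMetricSpace X] [PseudoMetricSpace Y]
    (f : X → Y) : Prop :=
  ∀ R : ℝ, 0 < R → ∃ S : ℝ, 0 < S ∧ ∀ x₁ x₂ : X, dist x₁ x₂ ≤ R → dist (f x₁) (f x₂) ≤ S

/-- Two maps are close if they are at uniformly bounded distance. -/
def Close {X Y : Type*} [PseudoMetricSpace Y] (f g : X → Y) : Prop :=
  ∃ C : ℝ, 0 < C ∧ ∀ x : X, dist (f x) (g x) ≤ C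

/-- `f : X → Y` is a coarse equivalence if it is uniformly expansive and admits a uniformly
expansive coarse inverse. -/
def IsCoarseEquivalence {X Y : Type*} [PseudoMetricSpace X] [PseudoMetricSpace Y]
    (f : X → Y) : Prop :=
  UniformlyExpansive f ∧
    ∃ g : Y → X, UniformlyExpansive g ∧ Close (f ∘ g) id ∧ Close (g ∘ f) id

/-- A metric space has bounded geometry if balls of radius `R` have uniformly bounded
cardinality. -/
def BoundedGeometry (X : Type*) [PseudoMetricSpace X] : Prop :=
  ∀ R : ℝ, 0 ≤ R → ∃ N : ℕ, ∀ x : X,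
    (Metric.closedBall x R).Finite ∧ (Metric.closedBall x R).ncard ≤ N

/-- The standard basis vector `δ_x` of `ℓ^p(X)`. -/
noncomputable def delta {X : Type*} (p : ℝ≥0∞) (x : X) : lp (fun _ : X => ℂ) p :=
  letI := Classical.decEq X
  lp.single p x 1

/-- The matrix coefficient `T_{xy} = (T δ_y)(x)` of a bounded operator on `ℓ^p`. -/
noncomputable def matCoef {X Y : Type*} (p : ℝ≥0∞) [Fact (1 ≤ p)]
    (T : lp (fun _ : X => ℂ) p →L[ℂ] lp (fun _ : Y => ℂ) p) (y : Y) (x : X) : ℂ :=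
  T (delta p x) y

/-- `T` has propagation at most `R`. -/
def HasPropagationLE {X : Type*} [PseudoMetricSpace X] (p : ℝ≥0∞) [Fact (1 ≤ p)]
    (T : lp (fun _ : X => ℂ) p →L[ℂ] lp (fun _ : X => ℂ) p) (R : ℝ) : Prop :=
  ∀ x y : X, matCoef p T x y ≠ 0 → dist x y ≤ R

/-- `T` has finite propagation. -/
def FiniteProp {X : Type*} [PseudoMetricSpace X] (p : ℝ≥0∞) [Fact (1 ≤ p)]
    (T : lp (fun _ : X => ℂ) p →L[ℂ] lp (fun _ : X => ℂ) p) : Prop :=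
  ∃ R : ℝ, 0 ≤ R ∧ HasPropagationLE p T R

/-- The `ℓ^p` uniform Roe algebra of `X`, as the operator-norm closure of the set of
finite propagation bounded operators on `ℓ^p(X)`. -/
noncomputable def RoeAlgSet (X : Type*) [PseudoMetricSpace X] (p : ℝ≥0∞) [Fact (1 ≤ p)] :
    Set (lp (fun _ : X => ℂ) p →L[ℂ] lp (fun _ : X => ℂ) p) :=
  closure {T | FiniteProp p T}

/-- Let `p ∈ [1,∞)`, `p ≠ 2`, and let `U : ℓ^p(X × ℕ) → ℓ^p(Y × ℕ)` be a surjective isometry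
of Lamperti form `(Uξ)(y,m) = h(y,m) ξ(g⁻¹(y,m))`. Define `f(x) = π_Y(g(x,0))` and
`f'(y) = π_X(g⁻¹(y,0))`. Assuming the uniform closeness property (in both directions), `f`
and `f'` are uniformly expansive, `f ∘ f'` and `f' ∘ f` are close to the identities, and
hence `X` and `Y` are coarsely equivalent. -/
lemma delta_apply_self {Z : Type*} (p : ℝ≥0∞) [Fact (1 ≤ p)] (z : Z) :
    (delta p z : ∀ _ : Z, ℂ) z = 1 := by
  letI : DecidableEq Z := Classical.decEq Z
  exact lp.single_apply_self p z 1

theorem stable_isomorphism_gives_coarse_equivalence {X Y : Type*}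
    [MetricSpace X] [MetricSpace Y] (hX : BoundedGeometry X) (hY : BoundedGeometry Y)
    (p : ℝ≥0∞) [Fact (1 ≤ p)] (hp : p ≠ ∞) (hp2 : p ≠ 2)
    (U : lp (fun _ : X × ℕ => ℂ) p ≃ₗᵢ[ℂ] lp (fun _ : Y × ℕ => ℂ) p)
    (h : Y × ℕ → ℂ) (g : (X × ℕ) ≃ (Y × ℕ)) (hh : ∀ z : Y × ℕ, ‖h z‖ = 1)
    (hU : ∀ (ξ : lp (fun _ : X × ℕ => ℂ) p) (z : Y × ℕ), (U ξ) z = h z * ξ (g.symm z))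
    (hclose : ∀ R : ℝ, 0 ≤ R → ∃ S : ℝ, 0 ≤ S ∧
      ∀ (x x' : X) (y y' : Y) (n n' m m' : ℕ), dist x x' ≤ R →
        ‖(U (delta p (x, n))) (y, m)‖ = 1 → ‖(U (delta p (x', n'))) (y', m')‖ = 1 →
          dist y y' ≤ S)
    (hclose' : ∀ R : ℝ, 0 ≤ R → ∃ S : ℝ, 0 ≤ S ∧
      ∀ (y y' : Y) (x x' : X) (m m' n n' : ℕ), dist y y' ≤ R →
        ‖(U.symm (delta p (y, m))) (x, n)‖ = 1 →
          ‖(U.symm (delta p (y', m'))) (x', n')‖ = 1 → dist x x' ≤ S) :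
    UniformlyExpansive (fun x : X => (g (x, 0)).1) ∧
      UniformlyExpansive (fun y : Y => (g.symm (y, 0)).1) ∧
      Close ((fun x : X => (g (x, 0)).1) ∘ (fun y : Y => (g.symm (y, 0)).1)) id ∧
      Close ((fun y : Y => (g.symm (y, 0)).1) ∘ (fun x : X => (g (x, 0)).1)) id ∧
      ∃ (f : X → Y) (f' : Y → X), UniformlyExpansive f ∧ UniformlyExpansive f' ∧
        Close (f ∘ f') id ∧ Close (f' ∘ f) id := by
  
  classical
  -- key norm facts
  have key1 : ∀ (x : X) (n : ℕ), ‖(U (delta p (x, n))) (g (x, n))‖ = 1 := by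
    intro x n
    rw [hU]
    simp only [Equiv.symm_apply_apply]
    rw [delta_apply_self p, norm_mul, hh, norm_one, mul_one]
  have key2 : ∀ (y : Y) (m : ℕ), ‖(U.symm (delta p (y, m))) (g.symm (y, m))‖ = 1 := by
    intro y m
    have h1 : (U (U.symm (delta p (y, m)))) (y, m)
        = h (y, m) * (U.symm (delta p (y, m))) (g.symm (y, m)) := hU _ _
    rw [U.apply_symm_apply] at h1
    have h2 : (delta p (y, m) : ∀ _ : Y × ℕ, ℂ) (y, m) = 1 := delta_apply_self p _
    rw [h2] at h1
    have := congrArg norm h1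
    rw [norm_one, norm_mul, hh, one_mul] at this
    exact this.symm
  set f : X → Y := fun x : X => (g (x, 0)).1 with hf
  set f' : Y → X := fun y : Y => (g.symm (y, 0)).1 with hf'
  have huf : UniformlyExpansive f := by
    intro R hR
    obtain ⟨S, hS0, hS⟩ := hclose R hR.le
    refine ⟨max S 1, lt_of_lt_of_le one_pos (le_max_right _ _), fun x x' hd => ?_⟩
    have := hS x x' (g (x, 0)).1 (g (x', 0)).1 0 0 (g (x, 0)).2 (g (x', 0)).2 hd
      (by simpa using key1 x 0) (by simpa using key1 x' 0)
    exact this.trans (le_max_left _ _)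
  have huf' : UniformlyExpansive f' := by
    intro R hR
    obtain ⟨S, hS0, hS⟩ := hclose' R hR.le
    refine ⟨max S 1, lt_of_lt_of_le one_pos (le_max_right _ _), fun y y' hd => ?_⟩
    have := hS y y' (g.symm (y, 0)).1 (g.symm (y', 0)).1 0 0 (g.symm (y, 0)).2
      (g.symm (y', 0)).2 hd (by simpa using key2 y 0) (by simpa using key2 y' 0)
    exact this.trans (le_max_left _ _)
  have hcl1 : Close (f ∘ f') id := by
    obtain ⟨S, hS0, hS⟩ := hclose 0 le_rfl
    refine ⟨max S 1, lt_of_lt_of_le one_pos (le_max_right _ _), fun y => ?_⟩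
    set x := (g.symm (y, 0)).1
    set n := (g.symm (y, 0)).2
    have hx : g (x, n) = (y, 0) := by
      show g ((g.symm (y, 0)).1, (g.symm (y, 0)).2) = _
      simp
    have h1 : ‖(U (delta p (x, 0))) ((g (x, 0)).1, (g (x, 0)).2)‖ = 1 := by
      simpa using key1 x 0
    have h2 : ‖(U (delta p (x, n))) (y, 0)‖ = 1 := by
      have := key1 x n; rwa [hx] at this
    have := hS x x (g (x, 0)).1 y 0 n (g (x, 0)).2 0 (by simp) h1 h2
    simpa using this.trans (le_max_left _ _)
  have hcl2 : Close (f' ∘ f) id := by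
    obtain ⟨S, hS0, hS⟩ := hclose' 0 le_rfl
    refine ⟨max S 1, lt_of_lt_of_le one_pos (le_max_right _ _), fun x => ?_⟩
    set y := (g (x, 0)).1
    set m := (g (x, 0)).2
    have hy : g.symm (y, m) = (x, 0) := by
      show g.symm ((g (x, 0)).1, (g (x, 0)).2) = _
      simp
    have h1 : ‖(U.symm (delta p (y, 0))) ((g.symm (y, 0)).1, (g.symm (y, 0)).2)‖ = 1 := by
      simpa using key2 y 0
    have h2 : ‖(U.symm (delta p (y, m))) (x, 0)‖ = 1 := by
      have := key2 y m; rwa [hy] at this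
    have := hS y y (g.symm (y, 0)).1 x 0 m ((g.symm (y, 0)).2) 0 (by simp) h1 h2
    simpa using this.trans (le_max_left _ _)
  exact ⟨huf, huf', hcl1, hcl2, f, f', huf, huf', hcl1, hcl2⟩
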